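/- Let N ≥ 3 and let N = a₁ + a₂ + a₃ and N = b₁ + b₂ + b₃ be two decompositions into positive integer summands. Call a prime p relevant if p divides N(N−1)(N−2) and p divides both ch(a₁,a₂,a₃) and ch(b₁,b₂,b₃), and set C equal to the product over all relevant primes p of p^(v_p(N−2) + 2·v_p(N−1) + 3·v_p(N)), where v_p denotes the p-adic valuation. Then, as real numbers, C > 3⁶·(1 − 4/N); and if moreover 2 is not a relevant prime, then C > 3³·2⁶·(1 − 4/N). -/

import Mathlib

open Finset

private def Ee (N p : ℕ) : ℕ :=
  (N - 2).factorization p + 2 * (N - 1).factorization p + 3 * N.factorization p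

private lemma EeDef (N p : ℕ) :
    Ee N p = (N - 2).factorization p + 2 * (N - 1).factorization p + 3 * N.factorization p := rfl

private lemma mod_eq_zero_of_dvd {a b : ℕ} (h : a ∣ b) : b % a = 0 := by
  obtain ⟨c, rfl⟩ := h
  exact Nat.mul_mod_right _ _

private lemma div3_le {q a b c : ℕ} (hq : 0 < q) : a / q + b / q + c / q ≤ (a + b + c) / q := by
  rw [Nat.le_div_iff_mul_le hq]
  have ha := Nat.div_mul_le_self a q
  have hb := Nat.div_mul_le_self b q
  have hc := Nat.div_mul_le_self c q
  calc (a / q + b / q + c / q) * q = a / q * q + b / q * q + c / q * q := by ring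
    _ ≤ a + b + c := by linarith

private lemma mod_sum_eq {q N a b c : ℕ} (hsum : a + b + c = N)
    (hdiv : N / q = a / q + b / q + c / q) :
    N % q = a % q + b % q + c % q := by
  have h1 := Nat.div_add_mod a q
  have h2 := Nat.div_add_mod b q
  have h3 := Nat.div_add_mod c q
  have h4 := Nat.div_add_mod N q
  have h5 : q * (N / q) = q * (a / q) + q * (b / q) + q * (c / q) := by
    rw [hdiv]; ring
  linarith

private lemma floors_eq {p N a b c : ℕ} (hp : p.Prime)
    (hsum : a + b + c = N)
    (hch : ¬ p ∣ Nat.multinomial Finset.univ ![a, b, c]) :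
    ∀ j, N / p ^ j = a / p ^ j + b / p ^ j + c / p ^ j := by
  haveI := Fact.mk hp
  have hspec := Nat.multinomial_spec (Finset.univ : Finset (Fin 3)) ![a, b, c]
  rw [Fin.prod_univ_three, Fin.sum_univ_three] at hspec
  simp only [Matrix.cons_val_zero, Matrix.cons_val_one, Matrix.head_cons,
    Matrix.cons_val_two, Matrix.tail_cons] at hspec
  set m := Nat.multinomial Finset.univ ![a, b, c] with hm
  have hm0 : m ≠ 0 := (Nat.multinomial_pos _ _).ne'
  set B := Nat.log p N + 1 with hB
  have hfact : ∀ x : ℕ, x ≤ N → (Nat.factorial x).factorization p = ∑ i ∈ Finset.Ico 1 B, x / p ^ i := by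
    intro x hx
    rw [Nat.factorization_def _ hp]
    exact padicValNat_factorial (lt_of_le_of_lt (Nat.log_mono_right hx) (Nat.lt_succ_self _))
  have hsumfac : (Nat.factorial N).factorization p
      = (Nat.factorial a).factorization p + (Nat.factorial b).factorization p + (Nat.factorial c).factorization p := by
    have hmv : m.factorization p = 0 := Nat.factorization_eq_zero_of_not_dvd hch
    rw [hsum] at hspec
    have := congrArg (fun n => n.factorization p) hspec
    simp only [Nat.factorization_mul (mul_ne_zero (mul_ne_zero (Nat.factorial_ne_zero a)
        (Nat.factorial_ne_zero b)) (Nat.factorial_ne_zero c)) hm0,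
      Nat.factorization_mul (mul_ne_zero (Nat.factorial_ne_zero a) (Nat.factorial_ne_zero b))
        (Nat.factorial_ne_zero c),
      Nat.factorization_mul (Nat.factorial_ne_zero a) (Nat.factorial_ne_zero b),
      Finsupp.add_apply, hmv] at this
    omega
  have hterm : ∀ i ∈ Finset.Ico 1 B, a / p ^ i + b / p ^ i + c / p ^ i = N / p ^ i := by
    rw [← Finset.sum_eq_sum_iff_of_le]
    · rw [hfact a (by omega), hfact b (by omega), hfact c (by omega), hfact N le_rfl] at hsumfac
      rw [← Finset.sum_add_distrib, ← Finset.sum_add_distrib] at hsumfac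
      omega
    · intro i _
      have := div3_le (a := a) (b := b) (c := c) (pow_pos hp.pos i)
      rw [hsum] at this
      exact this
  intro j
  rcases lt_or_ge j B with hj | hj
  · rcases Nat.eq_zero_or_pos j with rfl | hj1
    · simp [hsum]
    · exact (hterm j (Finset.mem_Ico.mpr ⟨hj1, hj⟩)).symm
  · have hNlt : N < p ^ j := by
      calc N < p ^ B := Nat.lt_pow_succ_log_self hp.one_lt N
      _ ≤ p ^ j := Nat.pow_le_pow_right hp.pos hj
    rw [Nat.div_eq_of_lt hNlt, Nat.div_eq_of_lt (by omega), Nat.div_eq_of_lt (by omega),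
      Nat.div_eq_of_lt (by omega)]

private lemma mods_eq {p N a b c : ℕ} (hp : p.Prime)
    (hsum : a + b + c = N)
    (hch : ¬ p ∣ Nat.multinomial Finset.univ ![a, b, c]) :
    ∀ j, N % p ^ j = a % p ^ j + b % p ^ j + c % p ^ j := by
  intro j
  exact mod_sum_eq hsum (floors_eq hp hsum hch j)

private lemma mod_double {q x : ℕ} (hq : 0 < q) (h : x % q = 0) :
    x % (2 * q) = 0 ∨ x % (2 * q) = q := by
  have h1 : x % (2 * q) % q = x % q := Nat.mod_mod_of_dvd x ⟨2, by ring⟩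
  have h2 : x % (2 * q) < 2 * q := Nat.mod_lt _ (by omega)
  have h3 : q ∣ x % (2 * q) := Nat.dvd_of_mod_eq_zero (h1.trans h)
  obtain ⟨s, hs⟩ := h3
  have hs2 : s < 2 := by
    by_contra hcon
    push_neg at hcon
    have : q * 2 ≤ q * s := Nat.mul_le_mul_left q hcon
    omega
  interval_cases s <;> omega

-- one of y z divisible by 2q, the other by q
private lemma case_odd {q x y z : ℕ} (h2 : 2 ≤ q)
    (hy : y % q = 0) (hz : z % q = 0)
    (hsum : x % (2 * q) + y % (2 * q) + z % (2 * q) = q + 1) :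
    q * (2 * q) ∣ y * z := by
  rcases mod_double (by omega) hy with h | h
  · have hyd : 2 * q ∣ y := Nat.dvd_of_mod_eq_zero h
    have hzd : q ∣ z := Nat.dvd_of_mod_eq_zero hz
    have := mul_dvd_mul hyd hzd
    rwa [show 2 * q * q = q * (2 * q) by ring] at this
  · rcases mod_double (by omega) hz with h' | h'
    · exact mul_dvd_mul (Nat.dvd_of_mod_eq_zero hy) (Nat.dvd_of_mod_eq_zero h')
    · omega

private lemma case_even1 {q x y z : ℕ} (h4 : 4 ≤ q)
    (hx2 : 2 ∣ x) (hy : y % q = 0) (hz : z % q = 0)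
    (hsum : x % (2 * q) + y % (2 * q) + z % (2 * q) = q + 2) :
    2 * (q * (2 * q)) ∣ x * (y * z) := by
  have hyz : q * (2 * q) ∣ y * z := by
    rcases mod_double (by omega) hz with h | h
    · exact mul_dvd_mul (Nat.dvd_of_mod_eq_zero hy) (Nat.dvd_of_mod_eq_zero h)
    · rcases mod_double (by omega) hy with h' | h'
      · have := mul_dvd_mul (Nat.dvd_of_mod_eq_zero h' : 2 * q ∣ y) (Nat.dvd_of_mod_eq_zero hz : q ∣ z)
        rwa [show 2 * q * q = q * (2 * q) by ring] at this
      · omega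
  exact mul_dvd_mul hx2 hyz

private lemma case_even2 {q x y z : ℕ} (h1 : 1 ≤ q)
    (hx : x % q = 0) (hy : y % q = 0) (hz : z % q = 0)
    (hsum : x % (2 * q) + y % (2 * q) + z % (2 * q) = q) :
    q * (2 * q) * (2 * q) ∣ x * y * z := by
  rcases mod_double (by omega) hx with ha | ha <;>
  rcases mod_double (by omega) hy with hb | hb <;>
  rcases mod_double (by omega) hz with hc | hc
  · omega
  · -- x,y div by 2q, z % (2q) = q, q ∣ z
    have := mul_dvd_mul (mul_dvd_mul (Nat.dvd_of_mod_eq_zero ha : 2 * q ∣ x)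
      (Nat.dvd_of_mod_eq_zero hb : 2 * q ∣ y)) (Nat.dvd_of_mod_eq_zero hz : q ∣ z)
    rwa [show 2 * q * (2 * q) * q = q * (2 * q) * (2 * q) by ring] at this
  · have := mul_dvd_mul (mul_dvd_mul (Nat.dvd_of_mod_eq_zero ha : 2 * q ∣ x)
      (Nat.dvd_of_mod_eq_zero hy : q ∣ y)) (Nat.dvd_of_mod_eq_zero hc : 2 * q ∣ z)
    rwa [show 2 * q * q * (2 * q) = q * (2 * q) * (2 * q) by ring] at this
  · omega
  · have := mul_dvd_mul (mul_dvd_mul (Nat.dvd_of_mod_eq_zero hx : q ∣ x)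
      (Nat.dvd_of_mod_eq_zero hb : 2 * q ∣ y)) (Nat.dvd_of_mod_eq_zero hc : 2 * q ∣ z)
    rwa [show q * (2 * q) * (2 * q) = q * (2 * q) * (2 * q) by ring] at this
  · omega
  · omega
  · omega

private lemma mod_two_pow_succ {t M : ℕ} (hd : 2 ^ t ∣ M) (hnd : ¬ 2 ^ (t + 1) ∣ M) :
    M % 2 ^ (t + 1) = 2 ^ t := by
  have hq : 0 < 2 ^ t := Nat.pow_pos (by norm_num)
  have heq : 2 ^ (t + 1) = 2 * 2 ^ t := by rw [pow_succ]; ring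
  have h : M % 2 ^ t = 0 := by
    obtain ⟨cc, rfl⟩ := hd
    exact Nat.mul_mod_right _ _
  rcases mod_double hq h with h' | h'
  · exfalso
    apply hnd
    rw [heq]
    exact Nat.dvd_of_mod_eq_zero h'
  · rw [heq]; exact h'

private lemma mod_eq_of_sub {q N s r : ℕ} (hs : s ≤ N) (hd : (N - s) % q = r) (hlt : r + s < q) :
    N % q = r + s := by
  set w := q * ((N - s) / q) with hw
  have h1 : w + r = N - s := by rw [hw, ← hd]; exact Nat.div_add_mod _ _
  have hN : N = w + (r + s) := by omega
  calc N % q = (w + (r + s)) % q := by rw [← hN]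
    _ = (r + s) % q := by rw [hw, Nat.mul_add_mod]
    _ = r + s := Nat.mod_eq_of_lt hlt

private lemma key_dvd_odd {p N a b c : ℕ} (hp : p.Prime) (hp2 : p ≠ 2) (hN : 3 ≤ N)
    (hsum : a + b + c = N)
    (H : ∀ j, N % p ^ j = a % p ^ j + b % p ^ j + c % p ^ j) :
    p ^ Ee N p ∣ a * b * c := by
  rw [EeDef]
  have hN0 : N ≠ 0 := by omega
  have hN1 : N - 1 ≠ 0 := by omega
  have hN2 : N - 2 ≠ 0 := by omega
  set k := N.factorization p with hk
  set k' := (N - 1).factorization p with hk'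
  set l := (N - 2).factorization p with hl
  have hp3 : 3 ≤ p := by
    rcases hp.two_le.lt_or_eq with h | h
    · omega
    · omega
  -- mutual exclusivity
  have hdvd_imp : ∀ t : ℕ, 0 < t → (p ^ t ∣ N → p ∣ N) ∧ True := by
    intro t ht; exact ⟨fun h => dvd_trans (dvd_pow_self p (by omega)) h, trivial⟩
  have hkk' : k = 0 ∨ k' = 0 := by
    by_contra hcon
    push_neg at hcon
    have h1 : p ∣ N := dvd_trans (dvd_pow_self p hcon.1) (Nat.ordProj_dvd N p)
    have h2 : p ∣ N - 1 := dvd_trans (dvd_pow_self p hcon.2) (Nat.ordProj_dvd (N - 1) p)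
    have : p ∣ 1 := by
      have := Nat.dvd_sub h1 h2
      rwa [show N - (N - 1) = 1 by omega] at this
    exact hp.one_lt.ne' (Nat.dvd_one.mp this)
  have hkl : k = 0 ∨ l = 0 := by
    by_contra hcon
    push_neg at hcon
    have h1 : p ∣ N := dvd_trans (dvd_pow_self p hcon.1) (Nat.ordProj_dvd N p)
    have h2 : p ∣ N - 2 := dvd_trans (dvd_pow_self p hcon.2) (Nat.ordProj_dvd (N - 2) p)
    have : p ∣ 2 := by
      have := Nat.dvd_sub h1 h2
      rwa [show N - (N - 2) = 2 by omega] at this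
    have := Nat.le_of_dvd (by norm_num) this
    omega
  have hk'l : k' = 0 ∨ l = 0 := by
    by_contra hcon
    push_neg at hcon
    have h1 : p ∣ N - 1 := dvd_trans (dvd_pow_self p hcon.1) (Nat.ordProj_dvd (N - 1) p)
    have h2 : p ∣ N - 2 := dvd_trans (dvd_pow_self p hcon.2) (Nat.ordProj_dvd (N - 2) p)
    have : p ∣ 1 := by
      have := Nat.dvd_sub h1 h2
      rwa [show N - 1 - (N - 2) = 1 by omega] at this
    exact hp.one_lt.ne' (Nat.dvd_one.mp this)
  rcases Nat.eq_zero_or_pos k with hk0 | hkpos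
  · rcases Nat.eq_zero_or_pos k' with hk'0 | hk'pos
    · rcases Nat.eq_zero_or_pos l with hl0 | hlpos
      · simp [hk0, hk'0, hl0]
      · -- only l
        rw [hk0, hk'0]
        simp only [Nat.mul_zero, Nat.add_zero]
        set q := p ^ l with hq
        have hql : q ∣ N - 2 := Nat.ordProj_dvd (N - 2) p
        have hq2 : 2 < q := by
          calc 2 < 3 := by omega
          _ ≤ p := hp3
          _ = p ^ 1 := (pow_one p).symm
          _ ≤ p ^ l := Nat.pow_le_pow_right (by omega) hlpos
        have hNq : N % q = 2 := by
          have := mod_eq_of_sub (q := q) (s := 2) (r := 0) (by omega)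
            (mod_eq_zero_of_dvd hql) (by omega)
          simpa using this
        have hH := H l
        rw [← hq, hNq] at hH
        have : a % q = 0 ∨ b % q = 0 ∨ c % q = 0 := by omega
        rcases this with h | h | h
        · exact dvd_mul_of_dvd_left (dvd_mul_of_dvd_left (Nat.dvd_of_mod_eq_zero h) b) c
        · exact dvd_mul_of_dvd_left (dvd_mul_of_dvd_right (Nat.dvd_of_mod_eq_zero h) a) c
        · exact dvd_mul_of_dvd_right (Nat.dvd_of_mod_eq_zero h) (a * b)
    · -- only k'
      have hl0 : l = 0 := hk'l.resolve_left (by omega)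
      rw [hk0, hl0]
      simp only [Nat.mul_zero, Nat.zero_add, Nat.add_zero]
      set q := p ^ k' with hq
      have hqd : q ∣ N - 1 := Nat.ordProj_dvd (N - 1) p
      have hq2 : 2 ≤ q := by
        calc 2 ≤ p := hp.two_le
        _ = p ^ 1 := (pow_one p).symm
        _ ≤ p ^ k' := Nat.pow_le_pow_right (by omega) hk'pos
      have hNq : N % q = 1 := by
        have := mod_eq_of_sub (q := q) (s := 1) (r := 0) (by omega)
          (mod_eq_zero_of_dvd hqd) (by omega)
        simpa using this
      have hH := H k'
      rw [← hq, hNq] at hH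
      have hpow : p ^ (2 * k') = q * q := by rw [hq, two_mul, pow_add]
      rw [hpow]
      have : (a % q = 0 ∧ b % q = 0) ∨ (a % q = 0 ∧ c % q = 0) ∨ (b % q = 0 ∧ c % q = 0) := by
        omega
      rcases this with ⟨h1, h2⟩ | ⟨h1, h2⟩ | ⟨h1, h2⟩
      · exact dvd_mul_of_dvd_left
          (mul_dvd_mul (Nat.dvd_of_mod_eq_zero h1) (Nat.dvd_of_mod_eq_zero h2)) c
      · have := mul_dvd_mul (Nat.dvd_of_mod_eq_zero h1) (Nat.dvd_of_mod_eq_zero h2)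
        have h3 : a * c ∣ a * b * c := ⟨b, by ring⟩
        exact dvd_trans this h3
      · have := mul_dvd_mul (Nat.dvd_of_mod_eq_zero h1) (Nat.dvd_of_mod_eq_zero h2)
        have h3 : b * c ∣ a * b * c := ⟨a, by ring⟩
        exact dvd_trans this h3
  · -- k > 0
    have hk'0 : k' = 0 := hkk'.resolve_left (by omega)
    have hl0 : l = 0 := hkl.resolve_left (by omega)
    rw [hk'0, hl0]
    simp only [Nat.mul_zero, Nat.zero_add, Nat.add_zero]
    set q := p ^ k with hq
    have hqd : q ∣ N := Nat.ordProj_dvd N p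
    have hNq : N % q = 0 := mod_eq_zero_of_dvd hqd
    have hH := H k
    rw [← hq, hNq] at hH
    have hpow : p ^ (3 * k) = q * q * q := by
      rw [hq, show 3 * k = k + k + k by ring, pow_add, pow_add]
    rw [hpow]
    exact mul_dvd_mul (mul_dvd_mul (Nat.dvd_of_mod_eq_zero (by omega))
      (Nat.dvd_of_mod_eq_zero (by omega))) (Nat.dvd_of_mod_eq_zero (by omega))

private lemma key_dvd_two {N a b c : ℕ} (hN : 3 ≤ N) (hsum : a + b + c = N)
    (H : ∀ j, N % 2 ^ j = a % 2 ^ j + b % 2 ^ j + c % 2 ^ j) :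
    2 ^ (Ee N 2 + 1) ∣ a * b * c := by
  rw [EeDef]
  have hN0 : N ≠ 0 := by omega
  have hN1 : N - 1 ≠ 0 := by omega
  have hN2 : N - 2 ≠ 0 := by omega
  set k := N.factorization 2 with hk
  set k' := (N - 1).factorization 2 with hk'
  set l := (N - 2).factorization 2 with hl
  rcases Nat.even_or_odd N with hpar | hpar
  · -- N even
    obtain ⟨half, hhalf⟩ := hpar
    have h2N : 2 ∣ N := ⟨half, by omega⟩
    have h2N2 : 2 ∣ N - 2 := by omega
    have hk'0 : k' = 0 := Nat.factorization_eq_zero_of_not_dvd (by omega)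
    have hkpos : 1 ≤ k := (Nat.Prime.factorization_pos_of_dvd Nat.prime_two hN0 h2N)
    have hlpos : 1 ≤ l := (Nat.Prime.factorization_pos_of_dvd Nat.prime_two hN2 h2N2)
    rw [hk'0]
    by_cases h4 : 4 ∣ N
    · -- k ≥ 2, l = 1
      have hk2 : 2 ≤ k := by
        rw [hk]
        exact (Nat.Prime.pow_dvd_iff_le_factorization Nat.prime_two hN0).mp
          (by norm_num at h4 ⊢; exact h4)
      have hl1 : l = 1 := by
        have hn4 : ¬ (2 : ℕ) ^ 2 ∣ N - 2 := by
          intro hcon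
          norm_num at hcon
          omega
        have := (Nat.Prime.pow_dvd_iff_le_factorization Nat.prime_two hN2).not.mp hn4
        omega
      rw [hl1]
      set q := 2 ^ k with hq
      have hqd : q ∣ N := Nat.ordProj_dvd N 2
      have hqnd : ¬ 2 ^ (k + 1) ∣ N := Nat.pow_succ_factorization_not_dvd hN0 Nat.prime_two
      have hq1 : 1 ≤ q := Nat.one_le_two_pow
      have hNq : N % q = 0 := mod_eq_zero_of_dvd hqd
      have hNQ : N % (2 * q) = q := by
        have := mod_two_pow_succ hqd hqnd
        rwa [pow_succ, mul_comm (2 ^ k) 2, ← hq] at this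
      have hHk := H k
      rw [← hq, hNq] at hHk
      have hHk1 := H (k + 1)
      rw [pow_succ, mul_comm (2 ^ k) 2, ← hq, hNQ] at hHk1
      have hdvd : q * (2 * q) * (2 * q) ∣ a * b * c :=
        case_even2 hq1 (by omega) (by omega) (by omega) hHk1.symm
      have hpow : q * (2 * q) * (2 * q) = 2 ^ (1 + 2 * 0 + 3 * k + 1) := by
        rw [hq]; ring
      rwa [hpow] at hdvd
    · -- k = 1, l ≥ 2
      have hk1 : k = 1 := by
        have hn4 : ¬ (2 : ℕ) ^ 2 ∣ N := by norm_num; omega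
        have := (Nat.Prime.pow_dvd_iff_le_factorization Nat.prime_two hN0).not.mp hn4
        omega
      have hl2 : 2 ≤ l := by
        rw [hl]
        apply (Nat.Prime.pow_dvd_iff_le_factorization Nat.prime_two hN2).mp
        norm_num
        omega
      rw [hk1]
      set q := 2 ^ l with hq
      have hq4 : 4 ≤ q := by
        calc (4 : ℕ) = 2 ^ 2 := by norm_num
        _ ≤ 2 ^ l := Nat.pow_le_pow_right (by norm_num) hl2
      have hqd : q ∣ N - 2 := Nat.ordProj_dvd (N - 2) 2
      have hqnd : ¬ 2 ^ (l + 1) ∣ N - 2 := Nat.pow_succ_factorization_not_dvd hN2 Nat.prime_two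
      have hNq : N % q = 2 := by
        have := mod_eq_of_sub (q := q) (s := 2) (r := 0) (by omega)
          (mod_eq_zero_of_dvd hqd) (by omega)
        simpa using this
      have hNQ : N % (2 * q) = q + 2 := by
        have h1 : (N - 2) % 2 ^ (l + 1) = 2 ^ l := mod_two_pow_succ hqd hqnd
        have := mod_eq_of_sub (q := 2 ^ (l + 1)) (s := 2) (r := 2 ^ l) (by omega) h1
          (by rw [pow_succ]; omega)
        rwa [pow_succ, mul_comm (2 ^ l) 2, ← hq] at this
      -- all of a b c are even
      have hH1 := H 1
      have hNm2 : N % 2 ^ 1 = 0 := by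
        rw [pow_one]; omega
      rw [hNm2] at hH1
      have hae : 2 ∣ a := Nat.dvd_of_mod_eq_zero (by rw [pow_one] at hH1; omega)
      have hbe : 2 ∣ b := Nat.dvd_of_mod_eq_zero (by rw [pow_one] at hH1; omega)
      have hce : 2 ∣ c := Nat.dvd_of_mod_eq_zero (by rw [pow_one] at hH1; omega)
      have hHl := H l
      rw [← hq, hNq] at hHl
      -- remainders mod q are all even
      have hra : 2 ∣ a % q := (Nat.dvd_mod_iff (by rw [hq]; exact dvd_pow_self 2 (by omega))).mpr hae
      have hrb : 2 ∣ b % q := (Nat.dvd_mod_iff (by rw [hq]; exact dvd_pow_self 2 (by omega))).mpr hbe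
      have hrc : 2 ∣ c % q := (Nat.dvd_mod_iff (by rw [hq]; exact dvd_pow_self 2 (by omega))).mpr hce
      have hHl1 := H (l + 1)
      rw [pow_succ, mul_comm (2 ^ l) 2, ← hq, hNQ] at hHl1
      -- one of a b c has remainder 2 mod q, others 0
      have hcases : (a % q = 2 ∧ b % q = 0 ∧ c % q = 0) ∨ (b % q = 2 ∧ a % q = 0 ∧ c % q = 0)
          ∨ (c % q = 2 ∧ a % q = 0 ∧ b % q = 0) := by omega
      have hgoal : 2 ^ (l + 2 * 0 + 3 * 1 + 1) ∣ 2 * (q * (2 * q)) * 2 := by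
        rw [hq]
        have : (2 : ℕ) * (2 ^ l * (2 * 2 ^ l)) * 2 = 2 ^ (2 * l + 3) := by ring
        rw [this]
        exact pow_dvd_pow 2 (by omega)
      rcases hcases with ⟨h1, h2, h3⟩ | ⟨h1, h2, h3⟩ | ⟨h1, h2, h3⟩
      · have := case_even1 hq4 hae h2 h3 (by omega)
        refine dvd_trans (dvd_trans (pow_dvd_pow 2 (show l + 2*0+3*1+1 ≤ 2*l+2 by omega)) ?_)
          (dvd_trans this ⟨1, by ring⟩)
        rw [hq]
        exact dvd_of_eq (by ring)
      · have := case_even1 hq4 hbe h2 h3 (by omega)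
        refine dvd_trans (dvd_trans (pow_dvd_pow 2 (show l + 2*0+3*1+1 ≤ 2*l+2 by omega)) ?_)
          (dvd_trans this ⟨1, by ring⟩)
        · rw [hq]
          exact dvd_of_eq (by ring)
      · have := case_even1 hq4 hce h2 h3 (by omega)
        refine dvd_trans (dvd_trans (pow_dvd_pow 2 (show l + 2*0+3*1+1 ≤ 2*l+2 by omega)) ?_)
          (dvd_trans this ⟨1, by ring⟩)
        · rw [hq]
          exact dvd_of_eq (by ring)
  · -- N odd
    have h2N1 : 2 ∣ N - 1 := by
      obtain ⟨half, hhalf⟩ := hpar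
      omega
    have hk0 : k = 0 := Nat.factorization_eq_zero_of_not_dvd (by
      intro hcon
      obtain ⟨half, hhalf⟩ := hpar
      omega)
    have hl0 : l = 0 := Nat.factorization_eq_zero_of_not_dvd (by
      intro hcon
      obtain ⟨half, hhalf⟩ := hpar
      omega)
    have hk'pos : 1 ≤ k' := Nat.Prime.factorization_pos_of_dvd Nat.prime_two hN1 h2N1
    rw [hk0, hl0]
    set q := 2 ^ k' with hq
    have hq2 : 2 ≤ q := by
      calc (2 : ℕ) = 2 ^ 1 := by norm_num
      _ ≤ 2 ^ k' := Nat.pow_le_pow_right (by norm_num) hk'pos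
    have hqd : q ∣ N - 1 := Nat.ordProj_dvd (N - 1) 2
    have hqnd : ¬ 2 ^ (k' + 1) ∣ N - 1 := Nat.pow_succ_factorization_not_dvd hN1 Nat.prime_two
    have hNq : N % q = 1 := by
      have := mod_eq_of_sub (q := q) (s := 1) (r := 0) (by omega)
        (mod_eq_zero_of_dvd hqd) (by omega)
      simpa using this
    have hNQ : N % (2 * q) = q + 1 := by
      have h1 : (N - 1) % 2 ^ (k' + 1) = 2 ^ k' := mod_two_pow_succ hqd hqnd
      have := mod_eq_of_sub (q := 2 ^ (k' + 1)) (s := 1) (r := 2 ^ k') (by omega) h1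
        (by rw [pow_succ]; omega)
      rwa [pow_succ, mul_comm (2 ^ k') 2, ← hq] at this
    have hHk := H k'
    rw [← hq, hNq] at hHk
    have hHk1 := H (k' + 1)
    rw [pow_succ, mul_comm (2 ^ k') 2, ← hq, hNQ] at hHk1
    have hcases : (a % q = 0 ∧ b % q = 0) ∨ (a % q = 0 ∧ c % q = 0) ∨ (b % q = 0 ∧ c % q = 0) := by
      omega
    have hpow : q * (2 * q) = 2 ^ (0 + 2 * k' + 3 * 0 + 1) := by
      rw [hq]; ring
    rcases hcases with ⟨h1, h2⟩ | ⟨h1, h2⟩ | ⟨h1, h2⟩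
    · have := case_odd (x := c) hq2 h1 h2 (by omega)
      rw [hpow] at this
      exact dvd_trans this ⟨c, by ring⟩
    · have := case_odd (x := b) hq2 h1 h2 (by omega)
      rw [hpow] at this
      exact dvd_trans this ⟨b, by ring⟩
    · have := case_odd (x := a) hq2 h1 h2 (by omega)
      rw [hpow] at this
      exact dvd_trans this ⟨a, by ring⟩

private lemma prod_primes_pow_dvd {s : Finset ℕ} {f : ℕ → ℕ} {m : ℕ}
    (hs : ∀ p ∈ s, Nat.Prime p) (h : ∀ p ∈ s, p ^ f p ∣ m) :
    (∏ p ∈ s, p ^ f p) ∣ m := by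
  classical
  induction s using Finset.induction_on with
  | empty => simp
  | insert _ _ hps ih =>
    rename_i p s
    rw [Finset.prod_insert hps]
    have hcop : (p ^ f p).Coprime (∏ q ∈ s, q ^ f q) := by
      apply Nat.Coprime.pow_left
      apply Nat.Coprime.prod_right
      intro q hq
      apply Nat.Coprime.pow_right
      exact (Nat.coprime_primes (hs p (Finset.mem_insert_self p s))
        (hs q (Finset.mem_insert_of_mem hq))).2 (fun he => hps (he ▸ hq))
    exact hcop.mul_dvd_of_dvd_of_dvd (h p (Finset.mem_insert_self p s))
      (ih (fun q hq => hs q (Finset.mem_insert_of_mem hq))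
          (fun q hq => h q (Finset.mem_insert_of_mem hq)))

private lemma amgm27 {x y z N : ℕ} (hsum : x + y + z = N) : 27 * (x * y * z) ≤ N ^ 3 := by
  have hs : (x : ℤ) + y + z = N := by exact_mod_cast hsum
  have hx : (0 : ℤ) ≤ x := Int.ofNat_nonneg x
  have hy : (0 : ℤ) ≤ y := Int.ofNat_nonneg y
  have hz : (0 : ℤ) ≤ z := Int.ofNat_nonneg z
  have key : (27 : ℤ) * (x * y * z) ≤ ((x : ℤ) + y + z) ^ 3 := by
    nlinarith [mul_nonneg hx (sq_nonneg ((y : ℤ) - z)),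
      mul_nonneg hy (sq_nonneg ((x : ℤ) - z)),
      mul_nonneg hz (sq_nonneg ((x : ℤ) - y)),
      mul_nonneg (add_nonneg (add_nonneg hx hy) hz) (sq_nonneg ((x : ℤ) - y)),
      mul_nonneg (add_nonneg (add_nonneg hx hy) hz) (sq_nonneg ((y : ℤ) - z)),
      mul_nonneg (add_nonneg (add_nonneg hx hy) hz) (sq_nonneg ((x : ℤ) - z))]
  rw [hs] at key
  exact_mod_cast key

private lemma mul32 {x y z N : ℕ} (hsum : x + y + z = N) (hx : N ≤ 2 * x) :
    32 * (x * y * z) ≤ N ^ 3 := by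
  have hs : (x : ℤ) + y + z = N := by exact_mod_cast hsum
  have hx' : (N : ℤ) ≤ 2 * x := by exact_mod_cast hx
  have hxn : (0 : ℤ) ≤ x := Int.ofNat_nonneg x
  have hyn : (0 : ℤ) ≤ y := Int.ofNat_nonneg y
  have hzn : (0 : ℤ) ≤ z := Int.ofNat_nonneg z
  have hxs : (0 : ℤ) ≤ x - (y + z) := by linarith
  have key : (32 : ℤ) * (x * y * z) ≤ ((x : ℤ) + y + z) ^ 3 := by
    nlinarith [mul_nonneg hxn (sq_nonneg ((y : ℤ) - z)),
      mul_nonneg (mul_nonneg hxs hxs) (by linarith : (0:ℤ) ≤ (x : ℤ) + (y + z)),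
      mul_nonneg (mul_nonneg hxs hxn) (by linarith : (0:ℤ) ≤ (y : ℤ) + z)]
  rw [hs] at key
  exact_mod_cast key

private lemma key_dvd_all {p N a b c : ℕ} (hp : p.Prime) (hN : 3 ≤ N)
    (hsum : a + b + c = N)
    (hch : ¬ p ∣ Nat.multinomial Finset.univ ![a, b, c]) :
    p ^ Ee N p ∣ a * b * c := by
  by_cases hp2 : p = 2
  · subst hp2
    exact dvd_trans (pow_dvd_pow 2 (Nat.le_succ _)) (key_dvd_two hN hsum (mods_eq hp hsum hch))
  · exact key_dvd_odd hp hp2 hN hsum (mods_eq hp hsum hch)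

private lemma big_exists {N a b c : ℕ} (hN : 3 ≤ N) (hsum : a + b + c = N)
    (hch : ¬ 2 ∣ Nat.multinomial Finset.univ ![a, b, c]) :
    N ≤ 2 * a ∨ N ≤ 2 * b ∨ N ≤ 2 * c := by
  set t := Nat.log 2 N with ht
  have hN0 : N ≠ 0 := by omega
  have ht1 : 2 ^ t ≤ N := Nat.pow_log_le_self 2 hN0
  have ht2 : N < 2 ^ (t + 1) := Nat.lt_pow_succ_log_self (by norm_num) N
  have hdivN : N / 2 ^ t = 1 := by
    have h1 : 1 ≤ N / 2 ^ t := (Nat.one_le_div_iff (Nat.pow_pos (by norm_num) : 0 < 2 ^ t)).mpr ht1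
    have h2 : N / 2 ^ t < 2 := by
      rw [Nat.div_lt_iff_lt_mul (Nat.pow_pos (by norm_num) : 0 < 2 ^ t)]
      have hps : (2:ℕ) ^ (t + 1) = 2 ^ t * 2 := pow_succ 2 t
      omega
    omega
  have hfl := floors_eq Nat.prime_two hsum hch t
  rw [hdivN] at hfl
  obtain ⟨da, hda⟩ : ∃ d, a / 2 ^ t = d := ⟨_, rfl⟩
  obtain ⟨db, hdb⟩ : ∃ d, b / 2 ^ t = d := ⟨_, rfl⟩
  obtain ⟨dc, hdc⟩ : ∃ d, c / 2 ^ t = d := ⟨_, rfl⟩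
  rw [hda, hdb, hdc] at hfl
  have : a / 2 ^ t = 1 ∨ b / 2 ^ t = 1 ∨ c / 2 ^ t = 1 := by
    rw [hda, hdb, hdc]
    omega
  have hstep : ∀ x : ℕ, x / 2 ^ t = 1 → N ≤ 2 * x := by
    intro x hx
    have : 2 ^ t ≤ x := (Nat.one_le_div_iff (Nat.pow_pos (by norm_num) : 0 < 2 ^ t)).mp (by omega)
    calc N ≤ 2 ^ (t + 1) - 1 := by omega
    _ ≤ 2 * 2 ^ t - 1 := by rw [pow_succ]; omega
    _ ≤ 2 * x := by omega
  rcases this with h | h | h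
  · exact Or.inl (hstep a h)
  · exact Or.inr (Or.inl (hstep b h))
  · exact Or.inr (Or.inr (hstep c h))

private lemma side_bound {N a b c : ℕ} (hN : 3 ≤ N)
    (h1 : 0 < a) (h2 : 0 < b) (h3 : 0 < c) (hsum : a + b + c = N)
    (s : Finset ℕ) (hsp : ∀ p ∈ s, Nat.Prime p)
    (hnd : ∀ p ∈ s, ¬ p ∣ Nat.multinomial Finset.univ ![a, b, c]) :
    27 * ∏ p ∈ s, p ^ Ee N p ≤ N ^ 3 ∧
    (¬ 2 ∣ Nat.multinomial Finset.univ ![a, b, c] →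
      64 * ∏ p ∈ s, p ^ Ee N p ≤ N ^ 3) := by
  classical
  have habc0 : a * b * c ≠ 0 := by positivity
  have hPd : (∏ p ∈ s, p ^ Ee N p) ∣ a * b * c :=
    prod_primes_pow_dvd hsp (fun p hp => key_dvd_all (hsp p hp) hN hsum (hnd p hp))
  constructor
  · calc 27 * ∏ p ∈ s, p ^ Ee N p ≤ 27 * (a * b * c) :=
        Nat.mul_le_mul_left 27 (Nat.le_of_dvd (by positivity) hPd)
    _ ≤ N ^ 3 := amgm27 hsum
  · intro hch2
    -- 32 * (a*b*c) ≤ N^3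
    have h32 : 32 * (a * b * c) ≤ N ^ 3 := by
      rcases big_exists hN hsum hch2 with h | h | h
      · exact mul32 hsum h
      · have := mul32 (x := b) (y := a) (z := c) (by omega) h
        rwa [show b * a * c = a * b * c by ring] at this
      · have := mul32 (x := c) (y := a) (z := b) (by omega) h
        rwa [show c * a * b = a * b * c by ring] at this
    -- 2-adic refinement
    set v := (a * b * c).factorization 2 with hv
    have hkey2 : 2 ^ (Ee N 2 + 1) ∣ a * b * c := key_dvd_two hN hsum (mods_eq Nat.prime_two hsum hch2)
    have hE2v : Ee N 2 + 1 ≤ v :=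
      (Nat.Prime.pow_dvd_iff_le_factorization Nat.prime_two habc0).mp hkey2
    set O := (a * b * c) / 2 ^ v with hO
    have hOmul : 2 ^ v * O = a * b * c := Nat.ordProj_mul_ordCompl_eq_self (a * b * c) 2
    have hOpos : 0 < O := Nat.ordCompl_pos 2 habc0
    -- the odd part of the product divides O
    have hodd : (∏ p ∈ s.erase 2, p ^ Ee N p) ∣ O := by
      apply prod_primes_pow_dvd (fun p hp => hsp p (Finset.mem_of_mem_erase hp))
      intro p hp
      have hpp := hsp p (Finset.mem_of_mem_erase hp)
      have hp2 : p ≠ 2 := Finset.ne_of_mem_erase hp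
      have hdvd : p ^ Ee N p ∣ 2 ^ v * O := by
        rw [hOmul]
        exact key_dvd_all hpp hN hsum (hnd p (Finset.mem_of_mem_erase hp))
      have hcop : (p ^ Ee N p).Coprime (2 ^ v) :=
        Nat.Coprime.pow _ _ (((Nat.coprime_primes hpp Nat.prime_two).2 hp2))
      exact hcop.dvd_of_dvd_mul_left hdvd
    have hsplit : (∏ p ∈ s, p ^ Ee N p) ≤ 2 ^ Ee N 2 * O := by
      by_cases h2s : 2 ∈ s
      · rw [← Finset.mul_prod_erase s _ h2s]
        exact Nat.mul_le_mul_left _ (Nat.le_of_dvd hOpos hodd)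
      · rw [← Finset.erase_eq_of_notMem h2s]
        calc (∏ p ∈ s.erase 2, p ^ Ee N p) ≤ O := Nat.le_of_dvd hOpos hodd
        _ ≤ 2 ^ Ee N 2 * O := Nat.le_mul_of_pos_left O (Nat.pow_pos (by norm_num) : 0 < 2 ^ Ee N 2)
    calc 64 * ∏ p ∈ s, p ^ Ee N p ≤ 64 * (2 ^ Ee N 2 * O) := Nat.mul_le_mul_left 64 hsplit
    _ = 32 * (2 ^ (Ee N 2 + 1) * O) := by ring
    _ ≤ 32 * (2 ^ v * O) := by
        have : (2:ℕ) ^ (Ee N 2 + 1) ≤ 2 ^ v := Nat.pow_le_pow_right (by norm_num) hE2v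
        exact Nat.mul_le_mul_left 32 (Nat.mul_le_mul_right O this)
    _ = 32 * (a * b * c) := by rw [hOmul]
    _ ≤ N ^ 3 := h32

theorem stmt_14 (N a₁ a₂ a₃ b₁ b₂ b₃ : ℕ) (hN : 3 ≤ N)
    (ha₁ : 0 < a₁) (ha₂ : 0 < a₂) (ha₃ : 0 < a₃) (hasum : a₁ + a₂ + a₃ = N)
    (hb₁ : 0 < b₁) (hb₂ : 0 < b₂) (hb₃ : 0 < b₃) (hbsum : b₁ + b₂ + b₃ = N)
    (S : Finset ℕ)
    (hS : S = (N * (N - 1) * (N - 2)).primeFactors.filter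
      (fun p => p ∣ Nat.multinomial Finset.univ ![a₁, a₂, a₃] ∧
                p ∣ Nat.multinomial Finset.univ ![b₁, b₂, b₃]))
    (C : ℕ)
    (hC : C = ∏ p ∈ S,
      p ^ ((N - 2).factorization p + 2 * (N - 1).factorization p + 3 * N.factorization p)) :
    (3 : ℝ) ^ 6 * (1 - 4 / N) < C ∧
    (2 ∉ S → (3 : ℝ) ^ 3 * 2 ^ 6 * (1 - 4 / N) < C) := by
  classical
  have hN0 : N ≠ 0 := by omega
  have hN1 : N - 1 ≠ 0 := by omega
  have hN2 : N - 2 ≠ 0 := by omega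
  set cha := Nat.multinomial Finset.univ ![a₁, a₂, a₃] with hcha
  set chb := Nat.multinomial Finset.univ ![b₁, b₂, b₃] with hchb
  set F := (N * (N - 1) * (N - 2)).primeFactors with hF
  have hA0 : N ^ 3 * (N - 1) ^ 2 * (N - 2) ≠ 0 := by positivity
  -- the full product over F equals N^3 (N-1)^2 (N-2)
  have hpf : (N ^ 3 * (N - 1) ^ 2 * (N - 2)).primeFactors = F := by
    rw [hF, Nat.primeFactors_mul (mul_ne_zero (pow_ne_zero 3 hN0) (pow_ne_zero 2 hN1)) hN2,
      Nat.primeFactors_mul (pow_ne_zero 3 hN0) (pow_ne_zero 2 hN1),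
      Nat.primeFactors_pow N (by norm_num), Nat.primeFactors_pow (N - 1) (by norm_num),
      Nat.primeFactors_mul (mul_ne_zero hN0 hN1) hN2, Nat.primeFactors_mul hN0 hN1]
  have hfacA : ∀ p : ℕ, (N ^ 3 * (N - 1) ^ 2 * (N - 2)).factorization p = Ee N p := by
    intro p
    rw [Nat.factorization_mul (mul_ne_zero (pow_ne_zero 3 hN0) (pow_ne_zero 2 hN1)) hN2,
      Nat.factorization_mul (pow_ne_zero 3 hN0) (pow_ne_zero 2 hN1),
      Nat.factorization_pow, Nat.factorization_pow]
    simp only [Finsupp.add_apply, Finsupp.smul_apply, smul_eq_mul, Ee]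
    ring
  have hprod : ∏ p ∈ F, p ^ Ee N p = N ^ 3 * (N - 1) ^ 2 * (N - 2) := by
    have hh := Nat.factorization_prod_pow_eq_self hA0
    rw [Finsupp.prod] at hh
    rw [Nat.support_factorization, hpf] at hh
    calc ∏ p ∈ F, p ^ Ee N p
        = ∏ p ∈ F, p ^ (N ^ 3 * (N - 1) ^ 2 * (N - 2)).factorization p :=
          Finset.prod_congr rfl (fun p _ => by rw [hfacA])
      _ = N ^ 3 * (N - 1) ^ 2 * (N - 2) := hh
  set T := F.filter (fun p => ¬ (p ∣ cha ∧ p ∣ chb)) with hT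
  set R' := ∏ p ∈ T, p ^ Ee N p with hR'
  have hCR : C * R' = N ^ 3 * (N - 1) ^ 2 * (N - 2) := by
    rw [hC, hS, hR', hT]
    have : ∀ p : ℕ, (N - 2).factorization p + 2 * (N - 1).factorization p
        + 3 * N.factorization p = Ee N p := fun p => rfl
    calc (∏ p ∈ F.filter (fun p => p ∣ cha ∧ p ∣ chb),
            p ^ ((N - 2).factorization p + 2 * (N - 1).factorization p + 3 * N.factorization p))
          * ∏ p ∈ F.filter (fun p => ¬ (p ∣ cha ∧ p ∣ chb)), p ^ Ee N p
        = (∏ p ∈ F.filter (fun p => p ∣ cha ∧ p ∣ chb), p ^ Ee N p)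
          * ∏ p ∈ F.filter (fun p => ¬ (p ∣ cha ∧ p ∣ chb)), p ^ Ee N p := rfl
      _ = ∏ p ∈ F, p ^ Ee N p := Finset.prod_filter_mul_prod_filter_not F _ _
      _ = N ^ 3 * (N - 1) ^ 2 * (N - 2) := hprod
  -- split T by divisibility of cha
  set Tb := T.filter (fun p => p ∣ cha) with hTb
  set Ta := T.filter (fun p => ¬ p ∣ cha) with hTa
  have hTprime : ∀ p ∈ T, Nat.Prime p := by
    intro p hp
    exact Nat.prime_of_mem_primeFactors (Finset.mem_filter.mp hp).1
  have hsplit : R' = (∏ p ∈ Tb, p ^ Ee N p) * ∏ p ∈ Ta, p ^ Ee N p := by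
    rw [hR', hTb, hTa]
    exact (Finset.prod_filter_mul_prod_filter_not T _ _).symm
  have hTaprime : ∀ p ∈ Ta, Nat.Prime p := fun p hp => hTprime p (Finset.mem_of_mem_filter p hp)
  have hTbprime : ∀ p ∈ Tb, Nat.Prime p := fun p hp => hTprime p (Finset.mem_of_mem_filter p hp)
  have hTand : ∀ p ∈ Ta, ¬ p ∣ cha := fun p hp => (Finset.mem_filter.mp hp).2
  have hTbnd : ∀ p ∈ Tb, ¬ p ∣ chb := by
    intro p hp
    have h1 := (Finset.mem_filter.mp hp).2
    have h2 := (Finset.mem_filter.mp (Finset.mem_of_mem_filter p hp : p ∈ T)).2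
    exact fun hd => h2 ⟨h1, hd⟩
  have hside_a := side_bound hN ha₁ ha₂ ha₃ hasum Ta hTaprime hTand
  have hside_b := side_bound hN hb₁ hb₂ hb₃ hbsum Tb hTbprime hTbnd
  have hbound1 : 729 * R' ≤ N ^ 3 * N ^ 3 := by
    rw [hsplit]
    calc 729 * ((∏ p ∈ Tb, p ^ Ee N p) * ∏ p ∈ Ta, p ^ Ee N p)
        = (27 * ∏ p ∈ Tb, p ^ Ee N p) * (27 * ∏ p ∈ Ta, p ^ Ee N p) := by ring
      _ ≤ N ^ 3 * N ^ 3 := Nat.mul_le_mul hside_b.1 hside_a.1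
  -- the main numeric implication
  have hC0 : C ≠ 0 := by
    intro h
    rw [h, zero_mul] at hCR
    exact hA0 hCR.symm
  have hR'0 : R' ≠ 0 := by
    intro h
    rw [h, mul_zero] at hCR
    exact hA0 hCR.symm
  have hNR : (0 : ℝ) < N := by
    have : 0 < N := by omega
    exact_mod_cast this
  have main : ∀ K : ℕ, K * R' ≤ N ^ 3 * N ^ 3 → (K : ℝ) * (1 - 4 / N) < C := by
    intro K hKR
    have hCpos : (0 : ℝ) < C := by exact_mod_cast Nat.pos_of_ne_zero hC0
    rcases le_or_gt N 4 with h4 | h4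
    · have hfrac : (1 : ℝ) - 4 / N ≤ 0 := by
        rw [sub_nonpos, le_div_iff₀ hNR, one_mul]
        exact_mod_cast h4
      calc (K : ℝ) * (1 - 4 / N) ≤ 0 :=
          mul_nonpos_of_nonneg_of_nonpos (by positivity) hfrac
        _ < C := hCpos
    · -- N ≥ 5
      have hkey : K * (N - 4) * R' < N * (N ^ 3 * (N - 1) ^ 2 * (N - 2)) := by
        calc K * (N - 4) * R' = (N - 4) * (K * R') := by ring
          _ ≤ (N - 4) * (N ^ 3 * N ^ 3) := Nat.mul_le_mul_left _ hKR
          _ < N * (N ^ 3 * (N - 1) ^ 2 * (N - 2)) := by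
              obtain ⟨m, rfl⟩ : ∃ m, N = m + 5 := ⟨N - 5, by omega⟩
              have e1 : m + 5 - 4 = m + 1 := by omega
              have e2 : m + 5 - 1 = m + 4 := by omega
              have e3 : m + 5 - 2 = m + 3 := by omega
              rw [e1, e2, e3]
              have base : (m + 1) * (m + 5) ^ 2 < (m + 4) ^ 2 * (m + 3) := by nlinarith
              calc (m + 1) * ((m + 5) ^ 3 * (m + 5) ^ 3)
                  = ((m + 1) * (m + 5) ^ 2) * (m + 5) ^ 4 := by ring
                _ < ((m + 4) ^ 2 * (m + 3)) * (m + 5) ^ 4 := by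
                    exact Nat.mul_lt_mul_of_lt_of_le base le_rfl (by positivity)
                _ = (m + 5) * ((m + 5) ^ 3 * (m + 4) ^ 2 * (m + 3)) := by ring
      rw [← hCR] at hkey
      have hlt : K * (N - 4) < C * N := by
        have h2 : K * (N - 4) * R' < (C * N) * R' := by
          calc K * (N - 4) * R' < N * (C * R') := hkey
            _ = (C * N) * R' := by ring
        exact Nat.lt_of_mul_lt_mul_right h2
      have hfrac : (1 : ℝ) - 4 / N = ((N : ℝ) - 4) / N := by field_simp
      rw [hfrac]
      rw [show (K : ℝ) * (((N : ℝ) - 4) / N) = (K * ((N : ℝ) - 4)) / N by ring,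
        div_lt_iff₀ hNR]
      have h4le : (4 : ℕ) ≤ N := by omega
      have := (Nat.cast_lt (α := ℝ)).mpr hlt
      push_cast [Nat.cast_sub h4le] at this
      linarith
  constructor
  · have h729 : ((729 : ℕ) : ℝ) * (1 - 4 / N) < C := main 729 hbound1
    have : (3 : ℝ) ^ 6 = ((729 : ℕ) : ℝ) := by norm_num
    rw [this]
    exact h729
  · intro h2S
    -- 2 ∈ F
    have h2F : 2 ∈ F := by
      rw [hF, Nat.mem_primeFactors]
      refine ⟨Nat.prime_two, ?_, by positivity⟩
      rcases Nat.even_or_odd N with he | ho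
      · obtain ⟨r, hr⟩ := he
        exact Dvd.dvd.mul_right (Dvd.dvd.mul_right ⟨r, by omega⟩ (N - 1)) (N - 2)
      · obtain ⟨r, hr⟩ := ho
        exact Dvd.dvd.mul_right (Dvd.dvd.mul_left ⟨r, by omega⟩ N) (N - 2)
    have h2T : 2 ∈ T := by
      rw [hT, Finset.mem_filter]
      refine ⟨h2F, ?_⟩
      intro hcon
      exact h2S (by rw [hS]; exact Finset.mem_filter.mpr ⟨h2F, hcon⟩)
    have hnand : ¬ (2 ∣ cha ∧ 2 ∣ chb) := (Finset.mem_filter.mp h2T).2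
    have hbound2 : 1728 * R' ≤ N ^ 3 * N ^ 3 := by
      by_cases hca : 2 ∣ cha
      · have hcb : ¬ 2 ∣ chb := fun h => hnand ⟨hca, h⟩
        rw [hsplit]
        calc 1728 * ((∏ p ∈ Tb, p ^ Ee N p) * ∏ p ∈ Ta, p ^ Ee N p)
            = (64 * ∏ p ∈ Tb, p ^ Ee N p) * (27 * ∏ p ∈ Ta, p ^ Ee N p) := by ring
          _ ≤ N ^ 3 * N ^ 3 := Nat.mul_le_mul (hside_b.2 hcb) hside_a.1
      · rw [hsplit]
        calc 1728 * ((∏ p ∈ Tb, p ^ Ee N p) * ∏ p ∈ Ta, p ^ Ee N p)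
            = (27 * ∏ p ∈ Tb, p ^ Ee N p) * (64 * ∏ p ∈ Ta, p ^ Ee N p) := by ring
          _ ≤ N ^ 3 * N ^ 3 := Nat.mul_le_mul hside_b.1 (hside_a.2 hca)
    have h1728 : ((1728 : ℕ) : ℝ) * (1 - 4 / N) < C := main 1728 hbound2
    have : (3 : ℝ) ^ 3 * 2 ^ 6 = ((1728 : ℕ) : ℝ) := by norm_num
    rw [this]
    exact h1728
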